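/- Let A be an n×n complex matrix, let Vₘ be an n×m complex matrix with Vₘ*Vₘ = I, let z ∈ ℂᵐ satisfy ‖z‖ = 1 and Vₘ*A*AVₘz = σ²z for some σ > 0, let b ∈ ℂⁿ, let x be the exact solution of Ax = b, and let x0 ∈ ℂⁿ. Define α₁ = ⟨b − Ax0, AVₘz⟩/‖AVₘz‖² and α₂ = ⟨x − x0, Vₘz⟩. Then α₁ − α₂ = ⟨x − x0, (A*A − σ²I)Vₘz⟩/σ². -/

import Mathlib

open Matrix

lemma toEuclideanLin_mul_apply {k l p : ℕ} (M : Matrix (Fin k) (Fin l) ℂ)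
    (N : Matrix (Fin l) (Fin p) ℂ) (v : EuclideanSpace ℂ (Fin p)) :
    Matrix.toEuclideanLin (M * N) v = Matrix.toEuclideanLin M (Matrix.toEuclideanLin N v) := by
  simp [Matrix.toEuclideanLin_apply, Matrix.mulVec_mulVec]

/-- With `Vₘᴴ Vₘ = I`, `‖z‖ = 1`, `Vₘᴴ Aᴴ A Vₘ z = σ² z` (`σ > 0`) and `A x = b`, the scalars
`α₁ = ⟨b - A x0, A Vₘ z⟩ / ‖A Vₘ z‖²` and `α₂ = ⟨x - x0, Vₘ z⟩` satisfy
`α₁ - α₂ = ⟨x - x0, (Aᴴ A - σ² I) Vₘ z⟩ / σ²`.  (The paper's inner product `⟨a, b⟩`, linear in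
the first slot, corresponds to Mathlib's `inner b a`.) -/
theorem gmres_sv_alpha_difference (n m : ℕ) (A : Matrix (Fin n) (Fin n) ℂ)
    (Vm : Matrix (Fin n) (Fin m) ℂ) (hVm : Vmᴴ * Vm = 1)
    (b x x0 : EuclideanSpace ℂ (Fin n)) (z : EuclideanSpace ℂ (Fin m))
    (σ : ℝ) (hσ : 0 < σ) (hz : ‖z‖ = 1)
    (hsv : Matrix.toEuclideanLin (Vmᴴ * Aᴴ * A * Vm) z = ((σ : ℂ) ^ 2) • z)
    (hx : Matrix.toEuclideanLin A x = b)
    (α₁ α₂ : ℂ)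
    (hα₁ : α₁ = (inner ℂ (Matrix.toEuclideanLin A (Matrix.toEuclideanLin Vm z))
        (b - Matrix.toEuclideanLin A x0) : ℂ) /
      (‖Matrix.toEuclideanLin A (Matrix.toEuclideanLin Vm z)‖ : ℂ) ^ 2)
    (hα₂ : α₂ = (inner ℂ (Matrix.toEuclideanLin Vm z) (x - x0) : ℂ)) :
    α₁ - α₂ = (inner ℂ (Matrix.toEuclideanLin (Aᴴ * A - ((σ : ℂ) ^ 2) • 1)
        (Matrix.toEuclideanLin Vm z)) (x - x0) : ℂ) / ((σ : ℂ) ^ 2) := by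
  set w : EuclideanSpace ℂ (Fin n) := Matrix.toEuclideanLin Vm z with hw
  set u : EuclideanSpace ℂ (Fin n) := Matrix.toEuclideanLin A w with hu
  have hσ2 : ((σ : ℂ) ^ 2) ≠ 0 := pow_ne_zero _ (by exact_mod_cast hσ.ne')
  -- composition rewriting of hsv
  have hsv' : Matrix.toEuclideanLin Vmᴴ (Matrix.toEuclideanLin Aᴴ u) = ((σ : ℂ) ^ 2) • z := by
    rw [← hsv]
    rw [show Vmᴴ * Aᴴ * A * Vm = Vmᴴ * (Aᴴ * (A * Vm)) by rw [Matrix.mul_assoc, Matrix.mul_assoc],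
      toEuclideanLin_mul_apply, toEuclideanLin_mul_apply, toEuclideanLin_mul_apply]
  -- ‖u‖² = σ²
  have hnorm : (‖u‖ : ℂ) ^ 2 = (σ : ℂ) ^ 2 := by
    have h1 : (inner ℂ u u : ℂ) = (‖u‖ : ℂ) ^ 2 := by
      rw [inner_self_eq_norm_sq_to_K]; norm_num
    have h2 : (inner ℂ u u : ℂ) = inner ℂ w (Matrix.toEuclideanLin Aᴴ u) := by
      rw [Matrix.toEuclideanLin_conjTranspose_eq_adjoint, hu, LinearMap.adjoint_inner_right]
    have h3 : ∀ y, (inner ℂ w y : ℂ) = inner ℂ z (Matrix.toEuclideanLin Vmᴴ y) := fun y => by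
      rw [Matrix.toEuclideanLin_conjTranspose_eq_adjoint, LinearMap.adjoint_inner_right]
    have h4 : (inner ℂ z (((σ : ℂ) ^ 2) • z) : ℂ) = (σ : ℂ) ^ 2 := by
      rw [inner_smul_right, inner_self_eq_norm_sq_to_K, hz]
      norm_num
    rw [← h1, h2, h3 _, hsv', h4]
  -- α₁ as inner (AᴴA w) (x - x0) / σ²
  have hA : Matrix.toEuclideanLin A (x - x0) = b - Matrix.toEuclideanLin A x0 := by
    rw [map_sub, hx]
  have hα₁' : α₁ = (inner ℂ (Matrix.toEuclideanLin Aᴴ u) (x - x0) : ℂ) / (σ : ℂ) ^ 2 := by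
    rw [hα₁, hnorm, ← hA, Matrix.toEuclideanLin_conjTranspose_eq_adjoint,
      LinearMap.adjoint_inner_left]
  -- RHS
  have hR : Matrix.toEuclideanLin (Aᴴ * A - ((σ : ℂ) ^ 2) • 1) w
      = Matrix.toEuclideanLin Aᴴ u - ((σ : ℂ) ^ 2) • w := by
    simp [map_sub, toEuclideanLin_mul_apply, hu, Matrix.toEuclideanLin_apply,
      Matrix.smul_mulVec]
  rw [hα₁', hα₂, hR, inner_sub_left, inner_smul_left, sub_div]
  congr 1
  rw [mul_comm, mul_div_assoc]
  simp [hσ2, Complex.ext_iff, inner_sub_right]
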